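/- Let P_1 and P_2 be monic real polynomials of degrees d_1 and d_2 respectively, all of whose coefficients are nonzero. For ε > 0 set P† := ε^{d_2}·P_1(x)·P_2(x/ε), a monic polynomial of degree d_1+d_2. Then there exists ε_0 > 0 such that for all ε ∈ (0,ε_0): for every k with d_2 ≤ k ≤ d_1+d_2, the sign of the coefficient of x^k in P† equals the sign of the coefficient of x^{k−d_2} in P_1; and for every k with 0 ≤ k < d_2, the sign of the coefficient of x^k in P† equals the product of the sign of the constant coefficient of P_1 and the sign of the coefficient of x^k in P_2. -/

import Mathlib

open Polynomial

lemma coeff_comp_C_mul_X (p : Polynomial ℝ) (a : ℝ) (j : ℕ) :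
    (p.comp (C a * X)).coeff j = p.coeff j * a ^ j := by
  induction p using Polynomial.induction_on' with
  | add p q hp hq => simp [add_comp, hp, hq, add_mul]
  | monomial n b =>
      rw [monomial_comp, mul_pow, ← mul_assoc, ← C_pow, ← C_mul]
      simp only [coeff_C_mul, coeff_X_pow, coeff_monomial]
      by_cases h : j = n <;> simp [h, eq_comm]

lemma real_sign_mul (a b : ℝ) : Real.sign (a * b) = Real.sign a * Real.sign b := by
  rcases lt_trichotomy a 0 with ha | ha | ha <;> rcases lt_trichotomy b 0 with hb | hb | hb
  · rw [Real.sign_of_pos (mul_pos_of_neg_of_neg ha hb), Real.sign_of_neg ha,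
      Real.sign_of_neg hb]; norm_num
  · simp [hb]
  · rw [Real.sign_of_neg (mul_neg_of_neg_of_pos ha hb), Real.sign_of_neg ha,
      Real.sign_of_pos hb]; norm_num
  · simp [ha]
  · simp [ha]
  · simp [ha]
  · rw [Real.sign_of_neg (mul_neg_of_pos_of_neg ha hb), Real.sign_of_pos ha,
      Real.sign_of_neg hb]; norm_num
  · simp [hb]
  · rw [Real.sign_of_pos (mul_pos ha hb), Real.sign_of_pos ha, Real.sign_of_pos hb]; norm_num

lemma sign_stable {f : ℝ → ℝ} (hf : Continuous f) (h0 : f 0 ≠ 0) :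
    ∃ δ > (0:ℝ), ∀ ε : ℝ, |ε| < δ → Real.sign (f ε) = Real.sign (f 0) := by
  rcases h0.lt_or_gt with h | h
  · have hopen : IsOpen {x : ℝ | f x < 0} := isOpen_lt hf continuous_const
    rcases Metric.mem_nhds_iff.mp (hopen.mem_nhds h) with ⟨δ, hδ, hball⟩
    refine ⟨δ, hδ, fun ε hε => ?_⟩
    have : f ε < 0 := hball (by simpa [Metric.mem_ball, Real.dist_eq] using hε)
    rw [Real.sign_of_neg this, Real.sign_of_neg h]
  · have hopen : IsOpen {x : ℝ | 0 < f x} := isOpen_lt continuous_const hf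
    rcases Metric.mem_nhds_iff.mp (hopen.mem_nhds h) with ⟨δ, hδ, hball⟩
    refine ⟨δ, hδ, fun ε hε => ?_⟩
    have : 0 < f ε := hball (by simpa [Metric.mem_ball, Real.dist_eq] using hε)
    rw [Real.sign_of_pos this, Real.sign_of_pos h]


/-- Concatenation lemma: for monic real polynomials `P₁`, `P₂` of degrees `d₁`,
`d₂` with all coefficients nonzero, set `P† := ε^{d₂} · P₁(x) · P₂(x/ε)`. Then
for all sufficiently small `ε > 0`: for `d₂ ≤ k ≤ d₁ + d₂` the sign of the
coefficient of `x^k` in `P†` equals the sign of the coefficient of `x^{k-d₂}`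
in `P₁`, and for `0 ≤ k < d₂` it equals the product of the sign of the constant
coefficient of `P₁` and the sign of the coefficient of `x^k` in `P₂`. -/
theorem stmt12 (P₁ P₂ : Polynomial ℝ) (d₁ d₂ : ℕ)
    (h₁ : P₁.Monic) (h₂ : P₂.Monic)
    (hd₁ : P₁.natDegree = d₁) (hd₂ : P₂.natDegree = d₂)
    (hnz₁ : ∀ k ≤ d₁, P₁.coeff k ≠ 0) (hnz₂ : ∀ k ≤ d₂, P₂.coeff k ≠ 0) :
    ∃ ε₀ > (0 : ℝ), ∀ ε : ℝ, 0 < ε → ε < ε₀ →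
      (∀ k, d₂ ≤ k → k ≤ d₁ + d₂ →
        Real.sign ((C (ε ^ d₂) * (P₁ * P₂.comp (C ε⁻¹ * X))).coeff k)
          = Real.sign (P₁.coeff (k - d₂))) ∧
      (∀ k, k < d₂ →
        Real.sign ((C (ε ^ d₂) * (P₁ * P₂.comp (C ε⁻¹ * X))).coeff k)
          = Real.sign (P₁.coeff 0) * Real.sign (P₂.coeff k)) := by
  have hco : ∀ (ε : ℝ), ε ≠ 0 → ∀ k,
      (C (ε ^ d₂) * (P₁ * P₂.comp (C ε⁻¹ * X))).coeff k
        = ∑ x ∈ Finset.HasAntidiagonal.antidiagonal k, P₁.coeff x.1 * P₂.coeff x.2 * ε ^ (d₂ - x.2) := by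
    intro ε hε k
    rw [coeff_C_mul, coeff_mul, Finset.mul_sum]
    refine Finset.sum_congr rfl fun x hx => ?_
    rw [coeff_comp_C_mul_X]
    by_cases hj : x.2 ≤ d₂
    · rw [pow_sub₀ ε hε hj, inv_pow]; ring
    · have : P₂.coeff x.2 = 0 := coeff_eq_zero_of_natDegree_lt (by omega)
      simp [this]
  have key : ∀ k : ℕ, ∃ δ > (0:ℝ), ∀ ε : ℝ, 0 < ε → ε < δ →
      ((d₂ ≤ k → k ≤ d₁ + d₂ →
        Real.sign ((C (ε ^ d₂) * (P₁ * P₂.comp (C ε⁻¹ * X))).coeff k)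
          = Real.sign (P₁.coeff (k - d₂))) ∧
       (k < d₂ →
        Real.sign ((C (ε ^ d₂) * (P₁ * P₂.comp (C ε⁻¹ * X))).coeff k)
          = Real.sign (P₁.coeff 0) * Real.sign (P₂.coeff k))) := by
    intro k
    by_cases hk2 : k < d₂
    · set h : ℝ → ℝ :=
        fun ε => ∑ x ∈ Finset.HasAntidiagonal.antidiagonal k, P₁.coeff x.1 * P₂.coeff x.2 * ε ^ (k - x.2)
        with hh
      have hcont : Continuous h :=
        continuous_finset_sum _ fun x _ => continuous_const.mul (continuous_pow _)
      have h0 : h 0 = P₁.coeff 0 * P₂.coeff k := by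
        rw [hh]
        beta_reduce
        rw [Finset.sum_eq_single ((0 : ℕ), k)]
        · simp
        · rintro ⟨i, j⟩ hx hne
          have hm := Finset.HasAntidiagonal.mem_antidiagonal.mp hx
          simp only at hm ⊢
          have hj : j < k := by
            rcases Nat.lt_or_ge j k with h' | h'
            · exact h'
            · exact absurd (by simp only [Prod.mk.injEq]; omega) hne
          rw [zero_pow (by omega), mul_zero]
        · intro habs
          exact absurd (Finset.HasAntidiagonal.mem_antidiagonal.mpr (by simp)) habs
      have hne : h 0 ≠ 0 := by
        rw [h0]; exact mul_ne_zero (hnz₁ 0 (Nat.zero_le _)) (hnz₂ k hk2.le)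
      rcases sign_stable hcont hne with ⟨δ, hδ, hsign⟩
      refine ⟨δ, hδ, fun ε hε hεδ => ⟨fun h1 _ => absurd h1 (by omega), fun _ => ?_⟩⟩
      have hg : (C (ε ^ d₂) * (P₁ * P₂.comp (C ε⁻¹ * X))).coeff k = ε ^ (d₂ - k) * h ε := by
        rw [hco ε (ne_of_gt hε) k, hh, Finset.mul_sum]
        refine Finset.sum_congr rfl fun x hx => ?_
        have hm := Finset.HasAntidiagonal.mem_antidiagonal.mp hx
        have hsplit : d₂ - x.2 = (d₂ - k) + (k - x.2) := by omega
        rw [hsplit, pow_add]; ring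
      rw [hg, real_sign_mul, Real.sign_of_pos (pow_pos hε _), one_mul,
        hsign ε (by rwa [abs_of_pos hε]), h0, real_sign_mul]
    · push_neg at hk2
      by_cases hk3 : k ≤ d₁ + d₂
      · set g : ℝ → ℝ :=
          fun ε => ∑ x ∈ Finset.HasAntidiagonal.antidiagonal k, P₁.coeff x.1 * P₂.coeff x.2 * ε ^ (d₂ - x.2)
          with hgdef
        have hcont : Continuous g :=
          continuous_finset_sum _ fun x _ => continuous_const.mul (continuous_pow _)
        have h0 : g 0 = P₁.coeff (k - d₂) := by
          rw [hgdef]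
          beta_reduce
          rw [Finset.sum_eq_single ((k - d₂ : ℕ), d₂)]
          · have hc : P₂.coeff d₂ = 1 := by rw [← hd₂]; exact h₂.coeff_natDegree
            simp [hc]
          · rintro ⟨i, j⟩ hx hne
            have hm := Finset.HasAntidiagonal.mem_antidiagonal.mp hx
            simp only at hm ⊢
            by_cases hlt : j < d₂
            · rw [zero_pow (by omega), mul_zero]
            · by_cases heq : j = d₂
              · exact absurd (by simp only [Prod.mk.injEq]; omega) hne
              · have : P₂.coeff j = 0 := coeff_eq_zero_of_natDegree_lt (by omega)
                simp [this]
          · intro habs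
            exact absurd (Finset.HasAntidiagonal.mem_antidiagonal.mpr (by simp; omega)) habs
        have hne0 : g 0 ≠ 0 := by rw [h0]; exact hnz₁ _ (by omega)
        rcases sign_stable hcont hne0 with ⟨δ, hδ, hsign⟩
        refine ⟨δ, hδ, fun ε hε hεδ => ⟨fun _ _ => ?_, fun h2 => absurd h2 (by omega)⟩⟩
        rw [hco ε (ne_of_gt hε) k]
        have hs := hsign ε (by rwa [abs_of_pos hε])
        rw [h0] at hs
        exact hs
      · exact ⟨1, one_pos, fun ε hε hεδ =>
          ⟨fun _ h' => absurd h' hk3, fun h2 => absurd h2 (by omega)⟩⟩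
  choose δf hδpos hδ using key
  have hne : (Finset.range (d₁ + d₂ + 1)).Nonempty := ⟨0, Finset.mem_range.mpr (by omega)⟩
  refine ⟨(Finset.range (d₁ + d₂ + 1)).inf' hne δf, ?_, ?_⟩
  · exact (Finset.lt_inf'_iff _).2 fun i _ => hδpos i
  · intro ε hε hεδ
    constructor
    · intro k hk1 hk3
      have hk : k ∈ Finset.range (d₁ + d₂ + 1) := Finset.mem_range.mpr (by omega)
      exact (hδ k ε hε (lt_of_lt_of_le hεδ (Finset.inf'_le _ hk))).1 hk1 hk3
    · intro k hk2
      have hk : k ∈ Finset.range (d₁ + d₂ + 1) := Finset.mem_range.mpr (by omega)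
      exact (hδ k ε hε (lt_of_lt_of_le hεδ (Finset.inf'_le _ hk))).2 hk2
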